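/- Let r, r' : {1, …, m} → ℝ and let ρ_r and ρ_{r'} be the associated softmax distributions. Then for every i ∈ {1, …, m}, |ρ_r(i) − ρ_{r'}(i)| ≤ 2 · max_{1≤j≤m} |r(j) − r'(j)|. -/

import Mathlib

lemma softmax_aux (m : ℕ) (r r' : Fin m → ℝ) (i : Fin m) (ε : ℝ)
    (h : ∀ j, |r j - r' j| ≤ ε) :
    Real.exp (r i) / (∑ j, Real.exp (r j)) - Real.exp (r' i) / (∑ j, Real.exp (r' j)) ≤
      2 * ε := by
  have hne : (Finset.univ : Finset (Fin m)).Nonempty := ⟨i, Finset.mem_univ i⟩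
  have hε : 0 ≤ ε := le_trans (abs_nonneg _) (h i)
  set S := ∑ j, Real.exp (r j) with hSdef
  set S' := ∑ j, Real.exp (r' j) with hS'def
  have hS : 0 < S := Finset.sum_pos (fun j _ => Real.exp_pos _) hne
  have hS' : 0 < S' := Finset.sum_pos (fun j _ => Real.exp_pos _) hne
  have h1 : Real.exp (-ε) * Real.exp (r i) ≤ Real.exp (r' i) := by
    rw [← Real.exp_add]
    apply Real.exp_le_exp.mpr
    have := abs_le.mp (h i)
    linarith [this.1, this.2]
  have h2 : S' ≤ Real.exp ε * S := by
    rw [Finset.mul_sum]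
    apply Finset.sum_le_sum
    intro j _
    rw [← Real.exp_add]
    apply Real.exp_le_exp.mpr
    have := abs_le.mp (h j)
    linarith [this.1, this.2]
  have hρle1 : Real.exp (r i) / S ≤ 1 := by
    rw [div_le_one hS]
    exact Finset.single_le_sum (fun j _ => le_of_lt (Real.exp_pos _)) (Finset.mem_univ i)
  have hρ0 : 0 ≤ Real.exp (r i) / S := le_of_lt (div_pos (Real.exp_pos _) hS)
  have key : Real.exp (-(2*ε)) * (Real.exp (r i) / S) ≤ Real.exp (r' i) / S' := by
    have hES : 0 < Real.exp ε * S := mul_pos (Real.exp_pos _) hS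
    have step1 : Real.exp (-ε) * Real.exp (r i) / (Real.exp ε * S) ≤ Real.exp (r' i) / S' :=
      div_le_div₀ (le_of_lt (Real.exp_pos _)) h1 hS' h2
    calc Real.exp (-(2*ε)) * (Real.exp (r i) / S)
        = Real.exp (-ε) * Real.exp (r i) / (Real.exp ε * S) := by
          have hmul : Real.exp (-(2*ε)) * Real.exp ε = Real.exp (-ε) := by
            rw [← Real.exp_add]; ring_nf
          field_simp
          linear_combination hmul
      _ ≤ Real.exp (r' i) / S' := step1
  have hexp : 1 - 2*ε ≤ Real.exp (-(2*ε)) := by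
    have := Real.add_one_le_exp (-(2*ε))
    linarith
  nlinarith [mul_le_mul_of_nonneg_right hexp hρ0]

theorem stmt_3 (m : ℕ) (hm : 0 < m) (r r' : Fin m → ℝ) (i : Fin m) :
    |Real.exp (r i) / (∑ j, Real.exp (r j)) - Real.exp (r' i) / (∑ j, Real.exp (r' j))| ≤
      2 * Finset.univ.sup' (Finset.univ_nonempty_iff.mpr ⟨⟨0, hm⟩⟩) (fun j => |r j - r' j|) := by
  set ε := Finset.univ.sup' (Finset.univ_nonempty_iff.mpr ⟨⟨0, hm⟩⟩) (fun j => |r j - r' j|)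
  have hbound : ∀ j, |r j - r' j| ≤ ε := fun j =>
    Finset.le_sup' (fun j => |r j - r' j|) (Finset.mem_univ j)
  have hbound' : ∀ j, |r' j - r j| ≤ ε := fun j => by
    rw [abs_sub_comm]; exact hbound j
  rw [abs_sub_le_iff]
  exact ⟨softmax_aux m r r' i ε hbound, softmax_aux m r' r i ε hbound'⟩
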